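/- Assume σ₂(W) < 1. Let f : ℝ^{m×n} → ℝ be convex and differentiable with gradient ∇f, and suppose x* ∈ ℝ^{m×n} minimizes f over the subspace {x ∈ ℝ^{m×n} : Ux = 0}. Then there exists λ* ∈ ℝ^{m×n} such that ∇f(x*) + Uλ* = 0 and ‖λ*‖_F ≤ ‖∇f(x*)‖_F / √(1 − σ₂(W)). -/

import Mathlib

open scoped RealInnerProductSpace

/-- Left multiplication of `x ∈ ℝ^{m×n}` by an `m × m` matrix `A`,
with `ℝ^{m×n}` viewed as a Euclidean space with the Frobenius inner product. -/
noncomputable def matApply {m n : ℕ} (A : Matrix (Fin m) (Fin m) ℝ)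
    (x : EuclideanSpace ℝ (Fin m × Fin n)) : EuclideanSpace ℝ (Fin m × Fin n) :=
  WithLp.toLp 2 (fun p : Fin m × Fin n => ∑ k : Fin m, A p.1 k * x (k, p.2))

-- dot product identity for symmetric U
lemma aux_dot_sq {m : ℕ} (U : Matrix (Fin m) (Fin m) ℝ)
    (hUsym : ∀ i j, U i j = U j i) (v : Fin m → ℝ) :
    dotProduct (U.mulVec v) (U.mulVec v)
      = dotProduct v ((U * U).mulVec v) := by
  simp only [dotProduct, Matrix.mulVec, Matrix.mul_apply]
  calc ∑ i, (∑ k, U i k * v k) * (∑ l, U i l * v l)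
      = ∑ i, ∑ k, ∑ l, (U i k * v k) * (U i l * v l) := by
        refine Finset.sum_congr rfl fun i _ => ?_
        rw [Finset.sum_mul_sum]
    _ = ∑ k, ∑ l, ∑ i, (U i k * v k) * (U i l * v l) := by
        rw [Finset.sum_comm]
        exact Finset.sum_congr rfl fun k _ => Finset.sum_comm
    _ = ∑ k, v k * ∑ l, (∑ i, U k i * U i l) * v l := by
        refine Finset.sum_congr rfl fun k _ => ?_
        rw [Finset.mul_sum]
        refine Finset.sum_congr rfl fun l _ => ?_
        rw [Finset.sum_mul, Finset.mul_sum]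
        refine Finset.sum_congr rfl fun i _ => ?_
        rw [hUsym k i]; ring

lemma aux_vec {m : ℕ} (W U : Matrix (Fin m) (Fin m) ℝ) (σ : ℝ)
    (hUU : U * U = 1 - W) (hUsym : ∀ i j, U i j = U j i)
    (hσ : ∀ v : Fin m → ℝ, (∑ i, v i) = 0 →
      dotProduct v (W.mulVec v) ≤ σ * dotProduct v v)
    (v : Fin m → ℝ) (hv : ∑ i, v i = 0) :
    (1 - σ) * dotProduct v v
      ≤ dotProduct (U.mulVec v) (U.mulVec v) := by
  rw [aux_dot_sq U hUsym v, hUU, Matrix.sub_mulVec, dotProduct_sub,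
    Matrix.one_mulVec]
  have h2 := hσ v hv
  linarith

-- column sums of U vanish
lemma aux_colsum {m : ℕ} (W U : Matrix (Fin m) (Fin m) ℝ)
    (hW1 : W.mulVec (fun _ => (1 : ℝ)) = fun _ => (1 : ℝ))
    (hUU : U * U = 1 - W) (hUsym : ∀ i j, U i j = U j i) (k : Fin m) :
    ∑ i, U i k = 0 := by
  have hsum : ∑ k : Fin m, (∑ i, U k i) * (∑ i, U k i) = 0 := by
    calc ∑ k : Fin m, (∑ i, U k i) * (∑ l, U k l)
        = ∑ k : Fin m, ∑ i, ∑ l, (U k i) * (U k l) := by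
          refine Finset.sum_congr rfl fun k _ => ?_
          rw [Finset.sum_mul_sum]
      _ = ∑ i, ∑ l, ∑ k, (U i k) * (U k l) := by
          rw [Finset.sum_comm]
          refine Finset.sum_congr rfl fun i _ => ?_
          rw [Finset.sum_comm]
          exact Finset.sum_congr rfl fun l _ =>
            Finset.sum_congr rfl fun k _ => by rw [hUsym k i]
      _ = ∑ i, ∑ l, (U * U) i l := by
          refine Finset.sum_congr rfl fun i _ => Finset.sum_congr rfl fun l _ => ?_
          rw [Matrix.mul_apply]
      _ = ∑ i : Fin m, ((1 : ℝ) - 1) := by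
          rw [hUU]
          refine Finset.sum_congr rfl fun i _ => ?_
          have hWrow : ∑ l, W i l = 1 := by
            have := congrFun hW1 i
            simpa [Matrix.mulVec, dotProduct] using this
          simp [Matrix.sub_apply, Finset.sum_sub_distrib, Matrix.one_apply, hWrow]
      _ = 0 := by simp
  have hk : (∑ i, U k i) * (∑ i, U k i) = 0 := by
    have := (Finset.sum_eq_zero_iff_of_nonneg
      (fun j _ => mul_self_nonneg (∑ i, U j i))).mp hsum k (Finset.mem_univ k)
    exact this
  have : ∑ i, U k i = 0 := by nlinarith [hk]
  calc ∑ i, U i k = ∑ i, U k i := Finset.sum_congr rfl fun i _ => hUsym i k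
    _ = 0 := this

theorem stmt10 (m n : ℕ) (hm : 0 < m)
    (W U : Matrix (Fin m) (Fin m) ℝ) (σ : ℝ)
    (hWsymm : W.IsSymm)
    (hW1 : W.mulVec (fun _ => (1 : ℝ)) = fun _ => (1 : ℝ))
    (hWpsd : W.PosSemidef) (hIW : (1 - W).PosSemidef)
    (hUpsd : U.PosSemidef) (hUU : U * U = 1 - W)
    -- `σ` is (an upper bound for) the second largest eigenvalue of `W`:
    -- it bounds the Rayleigh quotient of `W` on the orthogonal complement of `1`
    (hσ : ∀ v : Fin m → ℝ, (∑ i, v i) = 0 →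
      dotProduct v (W.mulVec v) ≤ σ * dotProduct v v)
    (hσ1 : σ < 1)
    (f : EuclideanSpace ℝ (Fin m × Fin n) → ℝ)
    (gf : EuclideanSpace ℝ (Fin m × Fin n) → EuclideanSpace ℝ (Fin m × Fin n))
    (hconv : ConvexOn ℝ Set.univ f)
    (hgrad : ∀ x, HasGradientAt f (gf x) x)
    (xs : EuclideanSpace ℝ (Fin m × Fin n))
    (hxs : matApply U xs = 0)
    (hmin : ∀ y, matApply U y = 0 → f xs ≤ f y) :
    ∃ lam : EuclideanSpace ℝ (Fin m × Fin n),
      gf xs + matApply U lam = 0 ∧ ‖lam‖ ≤ ‖gf xs‖ / Real.sqrt (1 - σ) := by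
  have hUsym : ∀ i j, U i j = U j i := by
    intro i j
    have := congrFun (congrFun hUpsd.1 i) j
    simpa [Matrix.conjTranspose_apply] using this.symm
  -- T as a linear map
  let T : EuclideanSpace ℝ (Fin m × Fin n) →ₗ[ℝ] EuclideanSpace ℝ (Fin m × Fin n) :=
    { toFun := matApply U
      map_add' := by
        intro a b
        ext p
        simp [matApply, PiLp.add_apply, mul_add, Finset.sum_add_distrib]
      map_smul' := by
        intro t a
        ext p
        simp [matApply, PiLp.smul_apply, smul_eq_mul, Finset.mul_sum, mul_left_comm] }
  have hTapp : ∀ x, matApply U x = T x := fun _ => rfl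
  -- symmetry of T
  have hsymm : T.IsSymmetric := by
    intro x y
    simp only [PiLp.inner_apply, RCLike.inner_apply, conj_trivial]
    show (∑ p : Fin m × Fin n, y p * matApply U x p)
      = ∑ p : Fin m × Fin n, matApply U y p * x p
    rw [Finset.sum_congr rfl fun p _ => mul_comm (y p) (matApply U x p),
      Finset.sum_congr rfl fun p _ => mul_comm (matApply U y p) (x p)]
    rw [Fintype.sum_prod_type, Fintype.sum_prod_type]
    simp only [matApply]
    calc ∑ i, ∑ j, (∑ k, U i k * x (k, j)) * y (i, j)
        = ∑ i, ∑ j, ∑ k, U i k * x (k, j) * y (i, j) := by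
          refine Finset.sum_congr rfl fun i _ => Finset.sum_congr rfl fun j _ => ?_
          rw [Finset.sum_mul]
      _ = ∑ i, ∑ k, ∑ j, U i k * x (k, j) * y (i, j) := by
          exact Finset.sum_congr rfl fun i _ => Finset.sum_comm
      _ = ∑ k, ∑ i, ∑ j, U i k * x (k, j) * y (i, j) := Finset.sum_comm
      _ = ∑ i, ∑ j, x (i, j) * ∑ k, U i k * y (k, j) := by
          refine Finset.sum_congr rfl fun i _ => ?_
          rw [Finset.sum_comm]
          refine Finset.sum_congr rfl fun j _ => ?_
          rw [Finset.mul_sum]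
          refine Finset.sum_congr rfl fun k _ => ?_
          rw [hUsym i k]; ring
  -- range T = (ker T)ᗮ
  have hle : LinearMap.range T ≤ (LinearMap.ker T)ᗮ := by
    rintro _ ⟨ν, rfl⟩
    rw [Submodule.mem_orthogonal]
    intro u hu
    rw [← hsymm u ν, LinearMap.mem_ker.mp hu, inner_zero_left]
  have hrange : LinearMap.range T = (LinearMap.ker T)ᗮ := by
    refine Submodule.eq_of_le_of_finrank_eq hle ?_
    have h1 := LinearMap.finrank_range_add_finrank_ker T
    have h2 := Submodule.finrank_add_finrank_orthogonal (K := LinearMap.ker T)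
    omega
  -- gradient orthogonal to kernel
  have horth : gf xs ∈ (LinearMap.ker T)ᗮ := by
    rw [Submodule.mem_orthogonal]
    intro d hd
    have hd' : matApply U d = 0 := LinearMap.mem_ker.mp hd
    have hline : HasDerivAt (fun t : ℝ => xs + t • d) d 0 := by
      simpa using ((hasDerivAt_id (0 : ℝ)).smul_const d).const_add xs
    have h0 : xs + (0 : ℝ) • d = xs := by simp
    have hF : HasFDerivAt f
        (InnerProductSpace.toDual ℝ (EuclideanSpace ℝ (Fin m × Fin n)) (gf xs))
        (xs + (0 : ℝ) • d) := by
      rw [h0]; exact (hgrad xs).hasFDerivAt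
    have hcomp := hF.comp_hasDerivAt 0 hline
    have hlocmin : IsLocalMin (fun t : ℝ => f (xs + t • d)) 0 := by
      refine Filter.Eventually.of_forall fun t => ?_
      have h3 : f xs ≤ f (xs + t • d) := by
        refine hmin _ ?_
        rw [hTapp, map_add, map_smul, ← hTapp xs, ← hTapp d, hxs, hd']
        simp
      simpa [h0] using h3
    have hz := hlocmin.hasDerivAt_eq_zero hcomp
    rw [InnerProductSpace.toDual_apply_apply] at hz
    rw [real_inner_comm]
    exact hz
  -- construct lam
  rw [← hrange] at horth
  obtain ⟨μ, hμ⟩ := horth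
  set μ' : EuclideanSpace ℝ (Fin m × Fin n) :=
    μ - (((LinearMap.ker T).orthogonalProjectionOnto μ : EuclideanSpace ℝ (Fin m × Fin n)))
    with hμ'def
  have hTμ' : T μ' = gf xs := by
    have hker : T (((LinearMap.ker T).orthogonalProjectionOnto μ :
        EuclideanSpace ℝ (Fin m × Fin n))) = 0 :=
      LinearMap.mem_ker.mp ((LinearMap.ker T).orthogonalProjectionOnto μ).2
    rw [hμ'def, map_sub, hμ, hker, sub_zero]
  have hμ'orth : μ' ∈ (LinearMap.ker T)ᗮ :=
    Submodule.sub_starProjection_mem_orthogonal (K := LinearMap.ker T) μ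
  rw [← hrange] at hμ'orth
  obtain ⟨ν, hν⟩ := hμ'orth
  refine ⟨-μ', ?_, ?_⟩
  · rw [hTapp, map_neg, hTμ']
    simp
  · -- norm bound
    have hcol : ∀ j, ∑ i, (-μ' : EuclideanSpace ℝ (Fin m × Fin n)) (i, j) = 0 := by
      intro j
      have h4 : ∀ i, (-μ' : EuclideanSpace ℝ (Fin m × Fin n)) (i, j)
          = -(∑ k, U i k * ν (k, j)) := by
        intro i
        rw [← hν, ← hTapp]
        simp [matApply]
      rw [Finset.sum_congr rfl fun i _ => h4 i, Finset.sum_neg_distrib, neg_eq_zero,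
        Finset.sum_comm]
      refine Finset.sum_eq_zero fun k _ => ?_
      rw [← Finset.sum_mul, aux_colsum W U hW1 hUU hUsym k, zero_mul]
    have hg : matApply U (-μ') = -(gf xs) := by rw [hTapp, map_neg, hTμ']
    have h1 : ‖gf xs‖ ^ 2
        = ∑ p : Fin m × Fin n, matApply U (-μ') p * matApply U (-μ') p := by
      rw [hg, show ‖gf xs‖ = ‖-(gf xs)‖ from (norm_neg _).symm,
        ← real_inner_self_eq_norm_sq]
      simp only [PiLp.inner_apply, RCLike.inner_apply, conj_trivial]
    have h2 : ‖(-μ' : EuclideanSpace ℝ (Fin m × Fin n))‖ ^ 2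
        = ∑ p : Fin m × Fin n, (-μ' : EuclideanSpace ℝ (Fin m × Fin n)) p
            * (-μ' : EuclideanSpace ℝ (Fin m × Fin n)) p := by
      rw [← real_inner_self_eq_norm_sq]
      simp only [PiLp.inner_apply, RCLike.inner_apply, conj_trivial]
    have hL : ∑ p : Fin m × Fin n, (-μ' : EuclideanSpace ℝ (Fin m × Fin n)) p
          * (-μ' : EuclideanSpace ℝ (Fin m × Fin n)) p
        = ∑ j, ∑ i, (-μ' : EuclideanSpace ℝ (Fin m × Fin n)) (i, j)
          * (-μ' : EuclideanSpace ℝ (Fin m × Fin n)) (i, j) := by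
      rw [Fintype.sum_prod_type]; exact Finset.sum_comm
    have hR : ∑ p : Fin m × Fin n, matApply U (-μ') p * matApply U (-μ') p
        = ∑ j, ∑ i, matApply U (-μ') (i, j) * matApply U (-μ') (i, j) := by
      rw [Fintype.sum_prod_type]; exact Finset.sum_comm
    have key : (1 - σ) * (‖(-μ' : EuclideanSpace ℝ (Fin m × Fin n))‖ ^ 2)
        ≤ ‖gf xs‖ ^ 2 := by
      rw [h1, h2, hL, hR, Finset.mul_sum]
      refine Finset.sum_le_sum fun j _ => ?_
      have h5 := aux_vec W U σ hUU hUsym hσ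
        (fun i => (-μ' : EuclideanSpace ℝ (Fin m × Fin n)) (i, j)) (hcol j)
      simpa [dotProduct, Matrix.mulVec, matApply] using h5
    have hs : (0 : ℝ) < Real.sqrt (1 - σ) := Real.sqrt_pos.mpr (by linarith)
    rw [le_div_iff₀ hs]
    have hsq : Real.sqrt (1 - σ) ^ 2 = 1 - σ := Real.sq_sqrt (by linarith)
    nlinarith [key, hsq, norm_nonneg (gf xs),
      mul_nonneg (norm_nonneg (-μ' : EuclideanSpace ℝ (Fin m × Fin n))) hs.le]
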